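/- Let G be a C3-free and C5-free graph, C = v1-...-v7 an induced 7-cycle (indices mod 7), and B_j the set of vertices whose neighborhood on C is exactly {v_{j-1}, v_{j+1}}. Then for every vertex x at distance 2 from C there exists an index i with N(x) ∩ B ⊆ B_{i-1} ∪ B_{i+1}, where B = ∪_j B_j. -/

import Mathlib

open SimpleGraph

/-- `c` lists the vertices of an induced cycle of length `n` in `G`:
the map is injective and adjacency holds exactly between consecutive vertices. -/
def IsInducedCycle {V : Type*} (G : SimpleGraph V) (n : ℕ) (c : ZMod n → V) : Prop :=
  Function.Injective c ∧ ∀ i j, G.Adj (c i) (c j) ↔ (i = j + 1 ∨ j = i + 1)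

def HasInducedCycle {V : Type*} (G : SimpleGraph V) (n : ℕ) : Prop :=
  ∃ c : ZMod n → V, IsInducedCycle G n c

/-- `G` contains an induced path on `n` vertices. -/
def HasInducedPath {V : Type*} (G : SimpleGraph V) (n : ℕ) : Prop :=
  ∃ p : Fin n → V, Function.Injective p ∧
    ∀ i j, G.Adj (p i) (p j) ↔ (i.val + 1 = j.val ∨ j.val + 1 = i.val)

/-- no pair of distinct non-adjacent vertices with comparable neighborhoods. -/
def NoComparablePair {V : Type*} (G : SimpleGraph V) : Prop :=
  ∀ u v : V, u ≠ v → ¬ G.Adj u v →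
    ¬ (G.neighborSet u ⊆ G.neighborSet v ∨ G.neighborSet v ⊆ G.neighborSet u)

/-- every induced odd cycle of `G` has length 7. -/
def OddCyclesAre7 {V : Type*} (G : SimpleGraph V) : Prop :=
  ∀ n : ℕ, 3 ≤ n → Odd n → HasInducedCycle G n → n = 7

/-- distance from a vertex to an (induced) 7-cycle given by `c`. -/
noncomputable def distToCycle {V : Type*} (G : SimpleGraph V) (c : ZMod 7 → V) (x : V) : ℕ :=
  sInf {d : ℕ | ∃ i : ZMod 7, G.dist x (c i) = d}

/-- `A_i`: vertices whose neighborhood on the cycle is exactly `{c i}`. -/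
def Aset {V : Type*} (G : SimpleGraph V) (c : ZMod 7 → V) (i : ZMod 7) : Set V :=
  {x | G.neighborSet x ∩ Set.range c = {c i}}

/-- `B_i`: vertices whose neighborhood on the cycle is exactly `{c (i-1), c (i+1)}`. -/
def Bset {V : Type*} (G : SimpleGraph V) (c : ZMod 7 → V) (i : ZMod 7) : Set V :=
  {x | G.neighborSet x ∩ Set.range c = {c (i - 1), c (i + 1)}}

/-- the closed neighborhood `N[C]` of the cycle. -/
def closedNbhd {V : Type*} (G : SimpleGraph V) (c : ZMod 7 → V) : Set V :=
  Set.range c ∪ {x | ∃ i : ZMod 7, G.Adj x (c i)}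

lemma no_c3 {V : Type*} {G : SimpleGraph V} (h3 : ¬ HasInducedCycle G 3)
    {a b d : V} (hab : G.Adj a b) (hbd : G.Adj b d) (hda : G.Adj d a) : False := by
  have nab := hab.ne
  have nbd := hbd.ne
  have nda := hda.ne
  apply h3
  refine ⟨![a, b, d], ?_, ?_⟩
  · intro i j h
    fin_cases i <;> fin_cases j <;> simp_all <;> rfl
  · intro i j
    fin_cases i <;> fin_cases j <;>
      simp [hab, hbd, hda, hab.symm, hbd.symm, hda.symm, G.loopless.irrefl a, G.loopless.irrefl b,
        G.loopless.irrefl d] <;> first | (left; rfl) | (right; rfl) | exact (by decide : ∀ z : ZMod 3, ¬ z = z + 1) _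

lemma no_c5 {V : Type*} {G : SimpleGraph V} (h5 : ¬ HasInducedCycle G 5)
    {p q r s t : V} (hpq : G.Adj p q) (hqr : G.Adj q r) (hrs : G.Adj r s)
    (hst : G.Adj s t) (htp : G.Adj t p)
    (npr : ¬ G.Adj p r) (nps : ¬ G.Adj p s) (nqs : ¬ G.Adj q s)
    (nqt : ¬ G.Adj q t) (nrt : ¬ G.Adj r t) : False := by
  have npq := hpq.ne
  have nqr := hqr.ne
  have nrs := hrs.ne
  have nst := hst.ne
  have ntp := htp.ne
  have nrp : ¬ G.Adj r p := fun h => npr h.symm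
  have nsp : ¬ G.Adj s p := fun h => nps h.symm
  have nsq : ¬ G.Adj s q := fun h => nqs h.symm
  have ntq : ¬ G.Adj t q := fun h => nqt h.symm
  have ntr : ¬ G.Adj t r := fun h => nrt h.symm
  have e1 : p ≠ r := fun h => by subst h; exact nps hrs
  have e2 : p ≠ s := fun h => by subst h; exact npr hrs.symm
  have e3 : q ≠ s := fun h => by subst h; exact nps hpq
  have e4 : q ≠ t := fun h => by subst h; exact nrt hqr.symm
  have e5 : r ≠ t := fun h => by subst h; exact nqt hqr
  apply h5
  refine ⟨![p, q, r, s, t], ?_, ?_⟩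
  · intro i j h
    fin_cases i <;> fin_cases j <;> simp_all <;> rfl
  · have hall : ∀ i : ZMod 5, i = 0 ∨ i = 1 ∨ i = 2 ∨ i = 3 ∨ i = 4 := by decide
    intro i j
    rcases hall i with rfl|rfl|rfl|rfl|rfl <;> rcases hall j with rfl|rfl|rfl|rfl|rfl <;>
      first
      | exact iff_of_true hpq (by decide)
      | exact iff_of_true hqr (by decide)
      | exact iff_of_true hrs (by decide)
      | exact iff_of_true hst (by decide)
      | exact iff_of_true htp (by decide)
      | exact iff_of_true hpq.symm (by decide)
      | exact iff_of_true hqr.symm (by decide)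
      | exact iff_of_true hrs.symm (by decide)
      | exact iff_of_true hst.symm (by decide)
      | exact iff_of_true htp.symm (by decide)
      | exact iff_of_false npr (by decide)
      | exact iff_of_false nps (by decide)
      | exact iff_of_false nqs (by decide)
      | exact iff_of_false nqt (by decide)
      | exact iff_of_false nrt (by decide)
      | exact iff_of_false nrp (by decide)
      | exact iff_of_false nsp (by decide)
      | exact iff_of_false nsq (by decide)
      | exact iff_of_false ntq (by decide)
      | exact iff_of_false ntr (by decide)
      | exact iff_of_false (G.loopless.irrefl _) (by decide)

lemma Bset_adj {V : Type*} {G : SimpleGraph V} {c : ZMod 7 → V} (hcinj : Function.Injective c)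
    {j : ZMod 7} {b : V} (hb : b ∈ Bset G c j) :
    G.Adj b (c (j - 1)) ∧ G.Adj b (c (j + 1)) ∧
      ∀ k, G.Adj b (c k) → k = j - 1 ∨ k = j + 1 := by
  have hb' : G.neighborSet b ∩ Set.range c = {c (j - 1), c (j + 1)} := hb
  refine ⟨?_, ?_, ?_⟩
  · have m1 : c (j - 1) ∈ G.neighborSet b ∩ Set.range c := by
      rw [hb']; exact Set.mem_insert _ _
    exact m1.1
  · have m2 : c (j + 1) ∈ G.neighborSet b ∩ Set.range c := by
      rw [hb']; exact Set.mem_insert_iff.2 (Or.inr rfl)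
    exact m2.1
  · intro k hk
    have : c k ∈ ({c (j - 1), c (j + 1)} : Set V) := by
      rw [← hb']; exact ⟨hk, k, rfl⟩
    rcases Set.mem_insert_iff.1 this with h | h
    · exact Or.inl (hcinj h)
    · exact Or.inr (hcinj h)

theorem stmt7 {V : Type*} [Fintype V] (G : SimpleGraph V)
    (h3 : ¬ HasInducedCycle G 3) (h5 : ¬ HasInducedCycle G 5)
    (c : ZMod 7 → V) (hc : IsInducedCycle G 7 c)
    (x : V) (hx : distToCycle G c x = 2) :
    ∃ i : ZMod 7, ∀ b : V, G.Adj x b → (∃ j : ZMod 7, b ∈ Bset G c j) →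
      b ∈ Bset G c (i - 1) ∪ Bset G c (i + 1) := by
  obtain ⟨hcinj, hcadj⟩ := hc
  -- x is not adjacent to the cycle
  have hxc : ∀ i, ¬ G.Adj x (c i) := by
    intro i hadj
    have h2 : distToCycle G c x ≤ G.dist x (c i) := Nat.sInf_le ⟨i, rfl⟩
    rw [hx] at h2
    have h3' : G.dist x (c i) ≤ 1 := by
      have := SimpleGraph.dist_le hadj.toWalk
      simpa using this
    omega
  -- key lemma: no neighbors in B_j and B_{j+1} or B_{j+3}
  have key : ∀ (j k : ZMod 7) (b b' : V), G.Adj x b → G.Adj x b' →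
      b ∈ Bset G c j → b' ∈ Bset G c k → (k = j + 1 ∨ k = j + 3) → False := by
    intro j k b b' hxb hxb' hb hb' hk
    obtain ⟨hb1, hb2, hb3⟩ := Bset_adj hcinj hb
    obtain ⟨hb1', hb2', hb3'⟩ := Bset_adj hcinj hb'
    have hb'j2 : G.Adj b' (c (j + 2)) := by
      rcases hk with rfl | rfl
      · rw [show j + 1 + 1 = j + 2 from by ring] at hb2'; exact hb2'
      · rw [show j + 3 - 1 = j + 2 from by ring] at hb1'; exact hb1'
    have nb'j1 : ¬ G.Adj b' (c (j + 1)) := by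
      intro h
      rcases hb3' _ h with h1 | h1 <;> rcases hk with rfl | rfl
      · exact (by decide : ∀ z : ZMod 7, z + 1 ≠ z + 1 - 1) j h1
      · exact (by decide : ∀ z : ZMod 7, z + 1 ≠ z + 3 - 1) j h1
      · exact (by decide : ∀ z : ZMod 7, z + 1 ≠ z + 1 + 1) j h1
      · exact (by decide : ∀ z : ZMod 7, z + 1 ≠ z + 3 + 1) j h1
    have nbj2 : ¬ G.Adj b (c (j + 2)) := by
      intro h
      rcases hb3 _ h with h1 | h1
      · exact (by decide : ∀ z : ZMod 7, z + 2 ≠ z - 1) j h1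
      · exact (by decide : ∀ z : ZMod 7, z + 2 ≠ z + 1) j h1
    have hcc : G.Adj (c (j + 1)) (c (j + 2)) := (hcadj _ _).mpr (Or.inr (by ring))
    by_cases hbb : G.Adj b b'
    · exact no_c3 h3 hxb hbb hxb'.symm
    · exact no_c5 h5 hxb hb2 hcc hb'j2.symm hxb'.symm (hxc _) (hxc _) nbj2 hbb
        (fun h => nb'j1 h.symm)
  by_cases hex : ∃ (j : ZMod 7) (b : V), G.Adj x b ∧ b ∈ Bset G c j
  · obtain ⟨j0, b0, hb0a, hb0⟩ := hex
    have diff : ∀ (k : ZMod 7) (b' : V), G.Adj x b' → b' ∈ Bset G c k →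
        k = j0 ∨ k = j0 + 2 ∨ k = j0 + 5 := by
      intro k b' ha hb'
      have n1 : k ≠ j0 + 1 := fun h => key j0 k b0 b' hb0a ha hb0 hb' (Or.inl h)
      have n3 : k ≠ j0 + 3 := fun h => key j0 k b0 b' hb0a ha hb0 hb' (Or.inr h)
      have n6 : j0 ≠ k + 1 := fun h => key k j0 b' b0 ha hb0a hb' hb0 (Or.inl h)
      have n4 : j0 ≠ k + 3 := fun h => key k j0 b' b0 ha hb0a hb' hb0 (Or.inr h)
      rcases (by decide : ∀ a d : ZMod 7, (d = a + 1 ∨ d = a + 3 ∨ a = d + 1 ∨ a = d + 3) ∨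
          (d = a ∨ d = a + 2 ∨ d = a + 5)) j0 k with (h | h | h | h) | h
      · exact absurd h n1
      · exact absurd h n3
      · exact absurd h n6
      · exact absurd h n4
      · exact h
    by_cases hex2 : ∃ b' : V, G.Adj x b' ∧ b' ∈ Bset G c (j0 + 2)
    · obtain ⟨b1, hb1a, hb1⟩ := hex2
      refine ⟨j0 + 1, ?_⟩
      intro b hadj hkex
      obtain ⟨k, hbk⟩ := hkex
      rcases diff k b hadj hbk with h0 | h2 | h5'
      · left; rw [show j0 + 1 - 1 = j0 from by ring]; exact h0 ▸ hbk
      · right; rw [show j0 + 1 + 1 = j0 + 2 from by ring]; exact h2 ▸ hbk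
      · exact (key (j0 + 2) k b1 b hb1a hadj hb1 hbk (Or.inr (by rw [h5']; ring))).elim
    · refine ⟨j0 - 1, ?_⟩
      intro b hadj hkex
      obtain ⟨k, hbk⟩ := hkex
      rcases diff k b hadj hbk with h0 | h2' | h5'
      · right; rw [show j0 - 1 + 1 = j0 from by ring]; exact h0 ▸ hbk
      · exact absurd ⟨b, hadj, h2' ▸ hbk⟩ hex2
      · left
        rw [show j0 - 1 - 1 = j0 + 5 from by
          rw [show (5 : ZMod 7) = -2 from by decide]; ring]
        exact h5' ▸ hbk
  · exact ⟨0, fun b hadj hkex => absurd ⟨hkex.choose, b, hadj, hkex.choose_spec⟩ hex⟩
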